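/- Let f : ℝ^m → ℝ be C¹, let α, β ∈ (0,1), δ₀ > 0, and let K ⊆ ℝ^m be a compact set with inf_{x ∈ K} ‖∇f(x)‖ > 0. Then inf_{x ∈ K} δ(x) > 0, where δ(x) is the backtracking learning rate; equivalently, there exists j₀ ∈ ℕ such that for every x ∈ K some step size δ ∈ {β^j δ₀ : 0 ≤ j ≤ j₀} satisfies Armijo's condition at x. -/

import Mathlib

open Gradient

/-- Armijo's condition at `x` for step size `δ`:
`f(x − δ∇f(x)) − f(x) ≤ −αδ‖∇f(x)‖²`. -/
def ArmijoCondition {E : Type*} [NormedAddCommGroup E] [InnerProductSpace ℝ E]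
    [CompleteSpace E] (f : E → ℝ) (α δ : ℝ) (x : E) : Prop :=
  f (x - δ • ∇ f x) - f x ≤ -(α * δ * ‖∇ f x‖ ^ 2)

/-- Let `f : ℝ^m → ℝ` be `C¹`, `α, β ∈ (0,1)`, `δ₀ > 0`, and `K ⊆ ℝ^m`
compact with `inf_{x ∈ K} ‖∇f(x)‖ > 0`. Then the backtracking learning rates are uniformly
bounded below on `K`: there is `j₀ ∈ ℕ` such that for every `x ∈ K` some step size
`δ ∈ {β^j δ₀ : 0 ≤ j ≤ j₀}` satisfies Armijo's condition at `x`. -/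
theorem backtracking_rate_uniform_lower_bound_on_compact
    {m : ℕ} (f : EuclideanSpace ℝ (Fin m) → ℝ) (hf : ContDiff ℝ 1 f)
    (α β δ₀ : ℝ) (hα0 : 0 < α) (hα1 : α < 1) (hβ0 : 0 < β) (hβ1 : β < 1) (hδ₀ : 0 < δ₀)
    (K : Set (EuclideanSpace ℝ (Fin m))) (hK : IsCompact K)
    (hinf : ∃ c > 0, ∀ x ∈ K, c ≤ ‖∇ f x‖) :
    ∃ j₀ : ℕ, ∀ x ∈ K, ∃ j ≤ j₀, ArmijoCondition f α (β ^ j * δ₀) x := by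
  obtain ⟨c, hc, hcK⟩ := hinf
  have hdiff : Differentiable ℝ f := hf.differentiable one_ne_zero
  have hgrad : Continuous (∇ f) := by
    have : Continuous (fderiv ℝ f) := hf.continuous_fderiv one_ne_zero
    exact (InnerProductSpace.toDual ℝ (EuclideanSpace ℝ (Fin m))).symm.continuous.comp this
  set U : ℕ → Set (EuclideanSpace ℝ (Fin m)) := fun j =>
    {x | f (x - (β ^ j * δ₀) • ∇ f x) - f x < -(α * (β ^ j * δ₀) * ‖∇ f x‖ ^ 2)} with hU
  have hUopen : ∀ j, IsOpen (U j) := by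
    intro j
    apply isOpen_lt
    · have hfc := hf.continuous
      fun_prop
    · exact (continuous_const.mul ((hgrad.norm.pow 2))).neg
  have hcover : K ⊆ ⋃ j, U j := by
    intro x hx
    set v := ∇ f x with hv
    have hvpos : (0:ℝ) < ‖v‖ := lt_of_lt_of_le hc (hcK x hx)
    -- derivative of t ↦ f (x - t • v) at 0 is -‖v‖²
    have hcurve : HasDerivAt (fun t : ℝ => x - t • v) (-v) 0 := by
      simpa using ((hasDerivAt_id (0:ℝ)).smul_const v).const_sub x
    have hfd : HasFDerivAt f (InnerProductSpace.toDual ℝ (EuclideanSpace ℝ (Fin m)) v)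
        ((fun t : ℝ => x - t • v) 0) := by
      simp only [zero_smul, sub_zero]
      exact (hdiff x).hasGradientAt.hasFDerivAt
    have hφ : HasDerivAt (fun t : ℝ => f (x - t • v)) (-‖v‖ ^ 2) 0 := by
      have h1 := hfd.comp_hasDerivAt 0 hcurve
      have hval : (InnerProductSpace.toDual ℝ (EuclideanSpace ℝ (Fin m)) v) (-v)
          = -‖v‖ ^ 2 := by
        rw [InnerProductSpace.toDual_apply_apply, inner_neg_right, real_inner_self_eq_norm_sq]
      rw [hval] at h1
      exact h1
    have hslope := hasDerivAt_iff_tendsto_slope.mp hφ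
    have hlt : -‖v‖ ^ 2 < -(α * ‖v‖ ^ 2) := by nlinarith [pow_pos hvpos 2]
    have hev : ∀ᶠ t in nhdsWithin (0:ℝ) {(0:ℝ)}ᶜ,
        slope (fun t : ℝ => f (x - t • v)) 0 t < -(α * ‖v‖ ^ 2) :=
      hslope (Iio_mem_nhds hlt)
    -- the sequence β^j * δ₀ tends to 0 within {0}ᶜ
    have htend : Filter.Tendsto (fun j : ℕ => β ^ j * δ₀) Filter.atTop
        (nhdsWithin 0 {(0:ℝ)}ᶜ) := by
      apply tendsto_nhdsWithin_of_tendsto_nhds_of_eventually_within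
      · simpa using (tendsto_pow_atTop_nhds_zero_of_lt_one hβ0.le hβ1).mul_const δ₀
      · exact Filter.Eventually.of_forall fun j =>
          ne_of_gt (mul_pos (pow_pos hβ0 j) hδ₀)
    obtain ⟨j, hj⟩ := (htend.eventually hev).exists
    have htpos : 0 < β ^ j * δ₀ := mul_pos (pow_pos hβ0 j) hδ₀
    rw [slope_def_field] at hj
    have : f (x - (β ^ j * δ₀) • v) - f x < -(α * (β ^ j * δ₀) * ‖v‖ ^ 2) := by
      have := (div_lt_iff₀ htpos).mp (by simpa using hj)
      nlinarith
    exact Set.mem_iUnion.mpr ⟨j, this⟩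
  obtain ⟨t, ht⟩ := hK.elim_finite_subcover U hUopen hcover
  refine ⟨t.sup id, fun x hx => ?_⟩
  obtain ⟨j, hjt, hjx⟩ := Set.mem_iUnion₂.mp (ht hx)
  exact ⟨j, Finset.le_sup (f := id) hjt, le_of_lt hjx⟩
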